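/- If every clause of a k-CNF formula (each clause having exactly k distinct variables) shares a variable with at most 2^k/e − 1 other clauses, then the formula is satisfiable. -/

import Mathlib

open scoped Classical
open Finset

lemma count_override {α : Type*} [Fintype α] [DecidableEq α] (T : Finset α) (b : α → Bool)
    (Q : (α → Bool) → Prop)
    (hQ : ∀ σ τ : α → Bool, (∀ u ∉ T, σ u = τ u) → Q σ → Q τ) :
    (Finset.univ.filter fun σ => Q σ).card
      = (Finset.univ.filter fun σ : α → Bool => Q σ ∧ ∀ u ∈ T, σ u = b u).card * 2 ^ T.card := by
  classical
  have h2 : (2:ℕ) ^ T.card = Fintype.card (↥T → Bool) := by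
    simp [Fintype.card_fun]
  rw [h2, ← Finset.card_univ, ← Finset.card_product]
  apply Finset.card_bij' (fun σ _ => ((fun u => if u ∈ T then b u else σ u), fun u : ↥T => σ u))
    (fun p _ => fun u => if h : u ∈ T then p.2 ⟨u, h⟩ else p.1 u)
  · intro σ hσ
    simp only [Finset.mem_filter, Finset.mem_univ, true_and] at hσ ⊢
    rw [Finset.mem_product]
    refine ⟨Finset.mem_filter.2 ⟨Finset.mem_univ _, ?_, ?_⟩, Finset.mem_univ _⟩
    · exact hQ σ _ (fun u hu => by simp [hu]) hσ
    · intro u hu; simp [hu]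
  · intro p hp
    rw [Finset.mem_product] at hp
    obtain ⟨hp1, -⟩ := hp
    simp only [Finset.mem_filter, Finset.mem_univ, true_and] at hp1 ⊢
    exact hQ p.1 _ (fun u hu => by simp [hu]) hp1.1
  · intro σ hσ
    funext u
    by_cases h : u ∈ T
    · simp only [h, dif_pos]
    · simp [h]
  · intro p hp
    rw [Finset.mem_product] at hp
    obtain ⟨hp1, -⟩ := hp
    simp only [Finset.mem_filter, Finset.mem_univ, true_and] at hp1
    ext u
    · by_cases h : (u : α) ∈ T
      · simp [h, hp1.2 u h]
      · simp [h]
    · simp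

lemma bool_ne (a b : Bool) (h : a ≠ b) : a = !b := by cases a <;> cases b <;> simp_all

lemma lll_count {α : Type*} [Fintype α] [DecidableEq α] {m k : ℕ}
    (v : Fin m → Fin k → α) (hv : ∀ j, Function.Injective (v j))
    (s : Fin m → Fin k → Bool) (x : ℝ) (hx0 : 0 < x) (hx1 : x < 1)
    (hnum : ∀ j, (1:ℝ) ≤ x * (1-x) ^ (Finset.univ.filter fun j' =>
        j' ≠ j ∧ ∃ i i', v j' i' = v j i).card * 2 ^ k) :
    ∃ σ : α → Bool, ∀ j, ∃ i, σ (v j i) = s j i := by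
  set good : Fin m → (α → Bool) → Prop := fun j σ => ∃ i, σ (v j i) = s j i with hgood
  set N : Finset (Fin m) → ℕ :=
    fun S => (Finset.univ.filter fun σ : α → Bool => ∀ j ∈ S, good j σ).card with hN
  have hx1' : (0:ℝ) ≤ 1 - x := by linarith
  -- the key step
  have key : ∀ S : Finset (Fin m),
      (∀ S₂ : Finset (Fin m), S₂.card < S.card → ∀ j ∉ S₂,
        (1-x) * N S₂ ≤ N (insert j S₂)) →
      ∀ j ∉ S, (1-x) * N S ≤ N (insert j S) := by
    intro S ih j hj
    set Dset := S.filter (fun j' => ∃ i i', v j' i' = v j i) with hDset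
    set S' := S.filter (fun j' => ¬ ∃ i i', v j' i' = v j i) with hS'
    have hS'S : S' ⊆ S := filter_subset _ _
    have hDS : Dset ⊆ S := filter_subset _ _
    have hunion : S' ∪ Dset = S := by
      rw [hDset, hS', Finset.union_comm]; exact Finset.filter_union_filter_not_eq _ S
    -- T and b₀
    set T : Finset α := Finset.image (fun i => v j i) Finset.univ with hT
    have hTcard : T.card = k := by
      rw [hT, Finset.card_image_of_injective _ (hv j), Finset.card_univ, Fintype.card_fin]
    set b₀ : α → Bool := fun u => if h : ∃ i, v j i = u then !(s j h.choose) else false with hb₀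
    have hbad_eq : ∀ σ : α → Bool, ¬ good j σ → ∀ u ∈ T, σ u = b₀ u := by
      intro σ hσ u hu
      rw [hT, Finset.mem_image] at hu
      obtain ⟨i, -, hi⟩ := hu
      have hex : ∃ i, v j i = u := ⟨i, hi⟩
      have hich : hex.choose = i := hv j (by rw [hex.choose_spec, hi])
      rw [hb₀]; simp only [dif_pos hex, hich]
      have : σ (v j i) ≠ s j i := fun hc => hσ ⟨i, hc⟩
      rw [← hi]; exact bool_ne _ _ this
    -- independence counting
    have hcount : N S' = (Finset.univ.filter fun σ : α → Bool =>
        (∀ j' ∈ S', good j' σ) ∧ ∀ u ∈ T, σ u = b₀ u).card * 2 ^ k := by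
      have h := count_override T b₀ (fun σ => ∀ j' ∈ S', good j' σ) ?_
      · rw [hTcard] at h
        simp only [hN]
        convert h using 2 <;> congr!
      intro σ τ hστ hQ j' hj'
      obtain ⟨i, hi⟩ := hQ j' hj'
      refine ⟨i, ?_⟩
      rw [← hστ _ ?_, hi]
      intro hmem
      rw [hT, Finset.mem_image] at hmem
      obtain ⟨i₀, -, hi₀⟩ := hmem
      rw [hS', Finset.mem_filter] at hj'
      exact hj'.2 ⟨i₀, i, hi₀.symm⟩
    -- bad set
    set bad := Finset.univ.filter
      (fun σ : α → Bool => (∀ j' ∈ S, good j' σ) ∧ ¬ good j σ) with hbad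
    have hAinsert : (Finset.univ.filter fun σ : α → Bool => ∀ j' ∈ insert j S, good j' σ)
        = (Finset.univ.filter fun σ : α → Bool => (∀ j' ∈ S, good j' σ) ∧ good j σ) := by
      ext σ
      simp only [Finset.mem_filter, Finset.forall_mem_insert]
      tauto
    have hsplit : N (insert j S) + bad.card = N S := by
      show (Finset.univ.filter fun σ : α → Bool => ∀ j' ∈ insert j S, good j' σ).card
          + bad.card
        = (Finset.univ.filter fun σ : α → Bool => ∀ j' ∈ S, good j' σ).card
      have h := Finset.card_filter_add_card_filter_not
        (s := Finset.univ.filter fun σ : α → Bool => ∀ j' ∈ S, good j' σ)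
        (p := fun σ => good j σ)
      rw [Finset.filter_filter, Finset.filter_filter] at h
      rw [hAinsert]
      exact h
    have hbadle : bad.card ≤ (Finset.univ.filter fun σ : α → Bool =>
        (∀ j' ∈ S', good j' σ) ∧ ∀ u ∈ T, σ u = b₀ u).card := by
      apply Finset.card_le_card
      intro σ hσ
      rw [hbad, Finset.mem_filter] at hσ
      rw [Finset.mem_filter]
      exact ⟨hσ.1, fun j' hj' => hσ.2.1 j' (hS'S hj'), hbad_eq σ hσ.2.2⟩
    -- chain
    have chain : ∀ E : Finset (Fin m), E ⊆ Dset →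
        ((1-x) ^ E.card : ℝ) * N S' ≤ N (S' ∪ E) := by
      intro E
      induction E using Finset.induction_on with
      | empty => simp
      | @insert a E ha ihE =>
        intro hins
        have haD : a ∈ Dset := hins (Finset.mem_insert_self a E)
        have hED : E ⊆ Dset := fun e he => hins (Finset.mem_insert_of_mem he)
        have haS' : a ∉ S' := by
          rw [hS', Finset.mem_filter]
          rw [hDset, Finset.mem_filter] at haD
          exact fun hc => hc.2 haD.2
        have haSE : a ∉ S' ∪ E := by
          rw [Finset.mem_union]; exact fun hc => hc.elim haS' ha
        have hsub : insert a (S' ∪ E) ⊆ S := by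
          intro e he
          rcases Finset.mem_insert.1 he with h | h
          · exact h ▸ hDS haD
          · rcases Finset.mem_union.1 h with h | h
            · exact hS'S h
            · exact hDS (hED h)
        have hcardlt : (S' ∪ E).card < S.card := by
          calc (S' ∪ E).card
              < (insert a (S' ∪ E)).card := Finset.card_lt_card (Finset.ssubset_insert haSE)
            _ ≤ S.card := Finset.card_le_card hsub
        have h1 := ih (S' ∪ E) hcardlt a haSE
        have h2 := ihE hED
        rw [Finset.union_insert]
        rw [Finset.card_insert_of_notMem ha, pow_succ]
        calc (1-x) ^ E.card * (1-x) * (N S' : ℝ)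
            = (1-x) * ((1-x) ^ E.card * N S') := by ring
          _ ≤ (1-x) * N (S' ∪ E) := by
              exact mul_le_mul_of_nonneg_left h2 hx1'
          _ ≤ N (insert a (S' ∪ E)) := h1
    have hchainD : ((1-x) ^ Dset.card : ℝ) * N S' ≤ N S := by
      have := chain Dset (le_refl _)
      rwa [hunion] at this
    -- numeric
    have hDnbr : Dset.card ≤ (Finset.univ.filter fun j' =>
        j' ≠ j ∧ ∃ i i', v j' i' = v j i).card := by
      apply Finset.card_le_card
      intro j' hj'
      rw [hDset, Finset.mem_filter] at hj'
      rw [Finset.mem_filter]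
      exact ⟨Finset.mem_univ _, fun hc => hj (hc ▸ hj'.1), hj'.2⟩
    have hnum' : (1:ℝ) ≤ x * (1-x) ^ Dset.card * 2 ^ k := by
      refine le_trans (hnum j) ?_
      have hmono := pow_le_pow_of_le_one hx1' (by linarith : 1 - x ≤ 1) hDnbr
      have h2k : (0:ℝ) ≤ 2 ^ k := by positivity
      exact mul_le_mul_of_nonneg_right
        (mul_le_mul_of_nonneg_left hmono (le_of_lt hx0)) h2k
    -- finish arithmetic
    have h2k : (0:ℝ) < 2 ^ k := by positivity
    have hb1 : (bad.card : ℝ) * 2 ^ k ≤ N S' := by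
      have : ((Finset.univ.filter fun σ : α → Bool =>
          (∀ j' ∈ S', good j' σ) ∧ ∀ u ∈ T, σ u = b₀ u).card * 2 ^ k : ℝ) = N S' := by
        rw [hcount]; push_cast; ring
      rw [← this]
      have := (Nat.cast_le (α := ℝ)).2 hbadle
      nlinarith
    have hb2 : (bad.card : ℝ) ≤ x * N S := by
      have y0 : (0:ℝ) ≤ (1-x) ^ Dset.card := by positivity
      have b0 : (0:ℝ) ≤ (bad.card : ℝ) := by positivity
      calc (bad.card : ℝ) = bad.card * 1 := by ring
        _ ≤ bad.card * (x * (1-x) ^ Dset.card * 2 ^ k) := by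
            exact mul_le_mul_of_nonneg_left hnum' b0
        _ = x * ((bad.card * 2 ^ k) * (1-x) ^ Dset.card) := by ring
        _ ≤ x * ((N S' : ℝ) * (1-x) ^ Dset.card) := by
            apply mul_le_mul_of_nonneg_left _ (le_of_lt hx0)
            exact mul_le_mul_of_nonneg_right hb1 y0
        _ = x * ((1-x) ^ Dset.card * N S') := by ring
        _ ≤ x * N S := mul_le_mul_of_nonneg_left hchainD (le_of_lt hx0)
    have hcast : (N (insert j S) : ℝ) + bad.card = N S := by
      exact_mod_cast congrArg (Nat.cast (R := ℝ)) hsplit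
    linarith
  have main : ∀ n (S : Finset (Fin m)), S.card ≤ n → ∀ j ∉ S,
      (1-x) * N S ≤ N (insert j S) := by
    intro n
    induction n with
    | zero => intro S hS; exact key S (fun S₂ h => absurd h (by omega))
    | succ n ihn =>
      intro S hS
      exact key S (fun S₂ h j hj => ihn S₂ (by omega) j hj)
  have grow : ∀ S : Finset (Fin m), ((1-x) ^ S.card : ℝ) * N ∅ ≤ N S := by
    intro S
    induction S using Finset.induction_on with
    | empty => simp
    | @insert a S ha ihS =>
      rw [Finset.card_insert_of_notMem ha, pow_succ]
      calc (1-x) ^ S.card * (1-x) * (N ∅ : ℝ)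
          = (1-x) * ((1-x) ^ S.card * N ∅) := by ring
        _ ≤ (1-x) * N S := mul_le_mul_of_nonneg_left ihS hx1'
        _ ≤ N (insert a S) := main S.card S (le_refl _) a ha
  have hNempty : (0:ℝ) < N ∅ := by
    show (0:ℝ) < ((Finset.univ.filter fun σ : α → Bool => ∀ j ∈ (∅ : Finset (Fin m)), good j σ).card : ℝ)
    simp only [Finset.notMem_empty, false_implies, implies_true, Finset.filter_true]
    rw [Finset.card_univ]
    have : 0 < Fintype.card (α → Bool) := Fintype.card_pos
    exact_mod_cast this
  have hNuniv : 0 < N Finset.univ := by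
    have := grow Finset.univ
    have : (0:ℝ) < N Finset.univ :=
      lt_of_lt_of_le (mul_pos (pow_pos (by linarith) _) hNempty) this
    exact_mod_cast this
  rw [Finset.card_pos] at hNuniv
  obtain ⟨σ, hσ⟩ := hNuniv
  rw [Finset.mem_filter] at hσ
  exact ⟨σ, fun j => hσ.2 j (Finset.mem_univ j)⟩
lemma lll_numeric (k D : ℕ) (hD : ((D:ℝ) + 1) * Real.exp 1 ≤ 2 ^ k) :
    (1:ℝ) ≤ 1/((D:ℝ)+2) * (1 - 1/((D:ℝ)+2)) ^ D * 2 ^ k := by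
  set n : ℝ := (D:ℝ) + 1 with hn
  have hn0 : 0 < n := by positivity
  have hn1 : 0 < n + 1 := by positivity
  have hx : 1 - 1/(n+1) = n/(n+1) := by field_simp; ring
  have he : (1 + 1/n) ^ (D+1) ≤ Real.exp 1 := by
    have h1 : 1 + 1/n ≤ Real.exp (1/n) := by
      have := Real.add_one_le_exp (1/n); linarith
    calc (1 + 1/n) ^ (D+1) ≤ (Real.exp (1/n)) ^ (D+1) := by
          apply pow_le_pow_left₀ (by positivity) h1
      _ = Real.exp (((D+1 : ℕ) : ℝ) * (1/n)) := (Real.exp_nat_mul (1/n) (D+1)).symm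
      _ = Real.exp 1 := by rw [show (((D+1 : ℕ) : ℝ)) * (1/n) = 1 from by push_cast; rw [hn]; field_simp]
  have key : (n+1) ^ (D+1) ≤ n ^ D * 2 ^ k := by
    calc (n+1) ^ (D+1) = n ^ (D+1) * (1 + 1/n) ^ (D+1) := by
          rw [← mul_pow]; congr 1; field_simp
      _ ≤ n ^ (D+1) * Real.exp 1 := by
          exact mul_le_mul_of_nonneg_left he (by positivity)
      _ = n ^ D * (n * Real.exp 1) := by rw [pow_succ]; ring
      _ ≤ n ^ D * 2 ^ k := by
          apply mul_le_mul_of_nonneg_left _ (by positivity)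
          calc n * Real.exp 1 = ((D:ℝ)+1) * Real.exp 1 := by rw [hn]
            _ ≤ 2 ^ k := hD
  have heq : ((D:ℝ)+2) = n + 1 := by rw [hn]; ring
  rw [heq, hx]
  rw [show 1/(n+1) * (n/(n+1)) ^ D * 2 ^ k = n ^ D * 2 ^ k / (n+1) ^ (D+1) from by
    rw [div_pow, pow_succ]; field_simp]
  rw [le_div_iff₀ (by positivity)]
  linarith

/-- A clause with exactly `k` distinct literals over Boolean variables indexed by `V`. -/
structure KClause (k : ℕ) (V : Type*) where
  vars : Fin k → V
  inj : Function.Injective vars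
  sign : Fin k → Bool

theorem stmt9 {k m : ℕ} {V : Type*} (C : Fin m → KClause k V)
    (hshare : ∀ j, ((Finset.univ.filter fun j' =>
        j' ≠ j ∧ ∃ i i', (C j').vars i' = (C j).vars i).card : ℝ)
      ≤ 2 ^ k / Real.exp 1 - 1) :
    ∃ σ : V → Bool, ∀ j, ∃ i, σ ((C j).vars i) = (C j).sign i := by
  classical
  rcases isEmpty_or_nonempty (Fin m) with hm | hm
  · exact ⟨fun _ => false, fun j => (hm.false j).elim⟩
  have hexp : (0:ℝ) < Real.exp 1 := Real.exp_pos 1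
  have ht1 : (1:ℝ) ≤ 2 ^ k / Real.exp 1 := by
    have h1 := hshare hm.some
    have h2 : (0:ℝ) ≤ ((Finset.univ.filter fun j' =>
        j' ≠ hm.some ∧ ∃ i i', (C j').vars i' = (C hm.some).vars i).card : ℝ) :=
      Nat.cast_nonneg _
    linarith
  set D := Nat.floor (2 ^ k / Real.exp 1 - 1) with hDdef
  have hD1 : (D:ℝ) + 1 ≤ 2 ^ k / Real.exp 1 := by
    have := Nat.floor_le (by linarith : (0:ℝ) ≤ 2 ^ k / Real.exp 1 - 1)
    rw [← hDdef] at this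
    linarith
  have hDe : ((D:ℝ) + 1) * Real.exp 1 ≤ 2 ^ k := (le_div_iff₀ hexp).mp hD1
  -- variables used
  set U : Finset V := Finset.image (fun p : Fin m × Fin k => (C p.1).vars p.2) Finset.univ
    with hU
  have hmem : ∀ j i, (C j).vars i ∈ U := fun j i =>
    Finset.mem_image.2 ⟨(j, i), Finset.mem_univ _, rfl⟩
  let v : Fin m → Fin k → ↥U := fun j i => ⟨(C j).vars i, hmem j i⟩
  have hvinj : ∀ j, Function.Injective (v j) := fun j a b hab =>
    (C j).inj (congrArg Subtype.val hab)
  set x : ℝ := 1/((D:ℝ)+2) with hxdef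
  have hx0 : 0 < x := by positivity
  have hx1 : x < 1 := by
    rw [hxdef, div_lt_one (by positivity)]
    have : (0:ℝ) ≤ (D:ℝ) := Nat.cast_nonneg _
    linarith
  have hnum : ∀ j, (1:ℝ) ≤ x * (1-x) ^ (Finset.univ.filter fun j' =>
      j' ≠ j ∧ ∃ i i', v j' i' = v j i).card * 2 ^ k := by
    intro j
    have hcards : (Finset.univ.filter fun j' => j' ≠ j ∧ ∃ i i', v j' i' = v j i)
        = (Finset.univ.filter fun j' =>
            j' ≠ j ∧ ∃ i i', (C j').vars i' = (C j).vars i) := by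
      apply Finset.filter_congr
      intro j' _
      constructor
      · rintro ⟨h1, i, i', h2⟩
        exact ⟨h1, i, i', congrArg Subtype.val h2⟩
      · rintro ⟨h1, i, i', h2⟩
        exact ⟨h1, i, i', Subtype.ext h2⟩
    have hle : (Finset.univ.filter fun j' =>
        j' ≠ j ∧ ∃ i i', v j' i' = v j i).card ≤ D := by
      apply Nat.le_floor
      rw [hcards]
      exact hshare j
    have base := lll_numeric k D hDe
    have h1x0 : (0:ℝ) ≤ 1 - x := by linarith
    have hmono := pow_le_pow_of_le_one h1x0 (by linarith : 1 - x ≤ 1) hle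
    have h2k : (0:ℝ) ≤ 2 ^ k := by positivity
    calc (1:ℝ) ≤ x * (1-x) ^ D * 2 ^ k := by rw [hxdef]; exact base
      _ ≤ x * (1-x) ^ (Finset.univ.filter fun j' =>
            j' ≠ j ∧ ∃ i i', v j' i' = v j i).card * 2 ^ k :=
          mul_le_mul_of_nonneg_right
            (mul_le_mul_of_nonneg_left hmono (le_of_lt hx0)) h2k
  obtain ⟨σ, hσ⟩ := lll_count v hvinj (fun j i => (C j).sign i) x hx0 hx1 hnum
  refine ⟨fun w => if h : w ∈ U then σ ⟨w, h⟩ else false, fun j => ?_⟩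
  obtain ⟨i, hi⟩ := hσ j
  refine ⟨i, ?_⟩
  show (if h : (C j).vars i ∈ U then σ ⟨(C j).vars i, h⟩ else false) = (C j).sign i
  rw [dif_pos (hmem j i)]
  exact hi
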